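/- For every n ≥ 2 and every k with 2 ≤ k ≤ n, there exist a finite output set O, a channel C from a secret set S with |S| = n to O, and a prior π on S with exactly k nonzero components, such that β(π, C) = 0 and β(υ, C) = (1 − k/n) / (1 − 1/n), where υ is the uniform prior on S; that is, the upper bound (1 − k/n)/(1 − 1/n) on β(υ, C) for channels with β(π, C) = 0 is attained. -/

import Mathlib

/-- A channel from secrets `S` to outputs `O`: nonnegative entries, rows sum to 1. -/
def IsChannel {S O : Type*} [Fintype O] (C : S → O → ℝ) : Prop :=
  (∀ s o, 0 ≤ C s o) ∧ ∀ s, ∑ o, C s o = 1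

/-- A prior on `S`: nonnegative, sums to 1. -/
def IsPrior {S : Type*} [Fintype S] (π : S → ℝ) : Prop :=
  (∀ s, 0 ≤ π s) ∧ ∑ s, π s = 1

/-- Bayes risk `R*(π, C) = 1 − ∑_o max_s (π s · C s o)`. -/
noncomputable def bayesRisk {S O : Type*} [Fintype S] [Nonempty S] [Fintype O]
    (π : S → ℝ) (C : S → O → ℝ) : ℝ :=
  1 - ∑ o, Finset.univ.sup' Finset.univ_nonempty (fun s => π s * C s o)

/-- Guessing error `G(π) = 1 − max_s π s`. -/
noncomputable def guessErr {S : Type*} [Fintype S] [Nonempty S] (π : S → ℝ) : ℝ :=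
  1 - Finset.univ.sup' Finset.univ_nonempty π

/-- Multiplicative Bayes risk leakage `β(π, C) = R*(π, C) / G(π)`. -/
noncomputable def betaL {S O : Type*} [Fintype S] [Nonempty S] [Fintype O]
    (π : S → ℝ) (C : S → O → ℝ) : ℝ :=
  bayesRisk π C / guessErr π

/-- The prior `π_{ab}` assigning 1/2 to each of `a` and `b` and 0 elsewhere. -/
noncomputable def pairPrior {S : Type*} [DecidableEq S] (a b : S) : S → ℝ :=
  fun s => if s = a ∨ s = b then 1 / 2 else 0

/-- Bayes security `β*(C)`: the minimum of `β(π_{ab}, C)` over distinct pairs `a ≠ b`. -/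
noncomputable def betaStar {S O : Type*} [Fintype S] [Nonempty S] [DecidableEq S] [Fintype O]
    (C : S → O → ℝ) (h : 1 < Fintype.card S) : ℝ :=
  (Finset.univ.filter (fun p : S × S => p.1 ≠ p.2)).inf'
    (by
      obtain ⟨a, b, hab⟩ := Fintype.exists_pair_of_one_lt_card h
      exact ⟨(a, b), by simp [hab]⟩)
    (fun p => betaL (pairPrior p.1 p.2) C)

/-- the bound `β(υ, C) ≤ (1 − k/n)/(1 − 1/n)` is attained: for every
`n ≥ 2` and `2 ≤ k ≤ n` there are a finite nonempty output set `Fin (m + 1)`, a channel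
`C` on `n` secrets and a prior `π` with exactly `k` nonzero components such that
`β(π, C) = 0` and `β(υ, C) = (1 − k/n)/(1 − 1/n)`. -/
theorem beta_uniform_upper_bound_tight (n k : ℕ) (hn : 2 ≤ n) (hk2 : 2 ≤ k) (hkn : k ≤ n) :
    ∃ (m : ℕ) (C : Fin n → Fin (m + 1) → ℝ) (π : Fin n → ℝ),
      IsChannel C ∧ IsPrior π ∧
      (Finset.univ.filter fun s => 0 < π s).card = k ∧
      @betaL (Fin n) (Fin (m + 1)) _ ⟨⟨0, by omega⟩⟩ _ π C = 0 ∧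
      @betaL (Fin n) (Fin (m + 1)) _ ⟨⟨0, by omega⟩⟩ _ (fun _ => (1 : ℝ) / n) C
        = (1 - (k : ℝ) / n) / (1 - 1 / n) := by
  have hk0 : 0 < k := by omega
  have hkk : k - 1 + 1 = k := by omega
  have hkR : (0:ℝ) < k := by exact_mod_cast hk0
  have hnR : (0:ℝ) < n := by positivity
  haveI : Nonempty (Fin n) := ⟨⟨0, by omega⟩⟩
  set f : Fin n → ℕ := fun s => if (s:ℕ) < k then (s:ℕ) else 0 with hf
  have hfk : ∀ s, f s < k - 1 + 1 := by intro s; simp only [hf]; split <;> omega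
  set C : Fin n → Fin (k - 1 + 1) → ℝ := fun s o => if (o:ℕ) = f s then 1 else 0 with hC
  set π : Fin n → ℝ := fun s => if (s:ℕ) < k then 1 / k else 0 with hπ
  have hCle : ∀ s o, C s o ≤ 1 := by intro s o; simp only [hC]; split <;> norm_num
  have hC0 : ∀ s o, 0 ≤ C s o := by intro s o; simp only [hC]; split <;> norm_num
  -- card of the support
  have hcard : (Finset.univ.filter (fun s : Fin n => (s:ℕ) < k)).card = k := by
    apply Finset.card_eq_of_bijective (fun i hi => ⟨i, by omega⟩)
    · intro a ha
      simp only [Finset.mem_filter] at ha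
      exact ⟨a, ha.2, rfl⟩
    · intro i hi; simp [hi]
    · intro i j hi hj h; simpa [Fin.ext_iff] using h
  -- sup' computation
  have hsup : ∀ (p : Fin n → ℝ) (v : ℝ), 0 < v → (∀ s, p s ≤ v) →
      (∀ s : Fin n, (s:ℕ) < k → p s = v) → ∀ o : Fin (k - 1 + 1),
      Finset.univ.sup' Finset.univ_nonempty (fun s => p s * C s o) = v := by
    intro p v hv hle heq o
    apply le_antisymm
    · apply Finset.sup'_le
      intro s _
      calc p s * C s o ≤ v * 1 := by
            apply mul_le_mul (hle s) (hCle s o) (hC0 s o) hv.le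
        _ = v := mul_one v
    · have hok : (o:ℕ) < k := by have := o.isLt; omega
      have hon : (o:ℕ) < n := by omega
      have := Finset.le_sup' (fun s => p s * C s o) (Finset.mem_univ (⟨(o:ℕ), hon⟩ : Fin n))
      refine le_trans ?_ this
      have hcso : C ⟨(o:ℕ), hon⟩ o = 1 := by simp [hC, hf, hok]
      rw [hcso, heq ⟨(o:ℕ), hon⟩ hok, mul_one]
  refine ⟨k - 1, C, π, ⟨hC0, ?_⟩, ⟨?_, ?_⟩, ?_, ?_, ?_⟩
  · -- rows sum to 1
    intro s
    have h : ∀ o : Fin (k-1+1), ((o:ℕ) = f s) = (o = ⟨f s, hfk s⟩) := by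
      intro o; simp [Fin.ext_iff]
    simp only [hC]
    simp_rw [h]
    simp
  · intro s; simp only [hπ]; split <;> positivity
  · -- prior sums to 1
    simp only [hπ]
    rw [Finset.sum_ite, Finset.sum_const_zero, add_zero, Finset.sum_const, hcard, nsmul_eq_mul]
    field_simp
  · -- support card
    have : (Finset.univ.filter fun s => 0 < π s) =
        (Finset.univ.filter (fun s : Fin n => (s:ℕ) < k)) := by
      apply Finset.filter_congr
      intro s _
      simp only [hπ]
      constructor
      · intro h; by_contra hc; simp [hc] at h
      · intro h; simp [h]; positivity
    rw [this, hcard]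
  · -- betaL π C = 0
    have hbr : bayesRisk π C = 0 := by
      unfold bayesRisk
      have : ∀ o : Fin (k-1+1),
          Finset.univ.sup' Finset.univ_nonempty (fun s => π s * C s o) = 1 / k := by
        apply hsup
        · positivity
        · intro s
          simp only [hπ]
          split
          · exact le_rfl
          · positivity
        · intro s hs; simp [hπ, hs]
      simp only [this]
      rw [Finset.sum_const, Finset.card_univ, Fintype.card_fin, hkk, nsmul_eq_mul]
      field_simp
      exact sub_self 1
    show betaL π C = 0
    simp only [betaL, hbr, zero_div]
  · -- betaL uniform
    have hbr : bayesRisk (fun _ : Fin n => (1:ℝ)/n) C = 1 - k / n := by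
      unfold bayesRisk
      have : ∀ o : Fin (k-1+1),
          Finset.univ.sup' Finset.univ_nonempty (fun s => (1:ℝ)/n * C s o) = 1 / n := by
        apply hsup
        · positivity
        · intro s; exact le_rfl
        · intro s _; rfl
      simp only [this]
      rw [Finset.sum_const, Finset.card_univ, Fintype.card_fin, hkk]
      ring
    have hge : guessErr (fun _ : Fin n => (1:ℝ)/n) = 1 - 1 / n := by
      unfold guessErr
      rw [Finset.sup'_const Finset.univ_nonempty ((1:ℝ)/n)]
    show betaL (fun _ : Fin n => (1:ℝ)/n) C = _
    simp only [betaL, hbr, hge]
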